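/- Let (X,≼) be a Debreu separable partial order and suppose there exists a countable subset B ⊆ X such that for all x, y ∈ X with x ⋈ y, either x ∈ B or y ∈ B. Then for every finite N, (X,≼) has a multi-utility consisting of N functions if and only if it has a Debreu separable realizer consisting of N linear extensions. -/
import Mathlib


/-- A binary relation is a partial order: reflexive, antisymmetric, transitive. -/
def IsPartialOrderRel {X : Type*} (r : X → X → Prop) : Prop :=
  (∀ x, r x x) ∧ (∀ x y, r x y → r y x → x = y) ∧ (∀ x y z, r x y → r y z → r x z)

/-- `r'` extends `r`. -/
def RelExtends {X : Type*} (r r' : X → X → Prop) : Prop :=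
  ∀ x y, r x y → r' x y

/-- `r` is total: any two elements are comparable. -/
def TotalRel {X : Type*} (r : X → X → Prop) : Prop :=
  ∀ x y, r x y ∨ r y x

/-- `r'` is a linear extension of `r`: a total partial order extending `r`. -/
def IsLinearExtension {X : Type*} (r r' : X → X → Prop) : Prop :=
  IsPartialOrderRel r' ∧ TotalRel r' ∧ RelExtends r r'

/-- `x` and `y` are incomparable with respect to `r`. -/
def Incomp {X : Type*} (r : X → X → Prop) (x y : X) : Prop :=
  ¬ r x y ∧ ¬ r y x

/-- `D` is Debreu dense for `r`. -/
def DebreuDense {X : Type*} (r : X → X → Prop) (D : Set X) : Prop :=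
  ∀ x y, r x y → ¬ r y x → ∃ d ∈ D, r x d ∧ r d y

/-- `(X, r)` is Debreu separable: it has a countable Debreu dense subset. -/
def DebreuSeparable {X : Type*} (r : X → X → Prop) : Prop :=
  ∃ D : Set X, D.Countable ∧ DebreuDense r D

/-- The limit of a sequence of binary relations. -/
def LimitRel {X : Type*} (r : ℕ → X → X → Prop) : X → X → Prop :=
  fun x y => ∃ n₀ : ℕ, ∀ n, n₀ ≤ n → r n x y

/-- Any extension of `r` is Debreu separable, given the hypotheses of the theorem. -/
lemma aux_linext_debreuSeparable {X : Type*} (r R : X → X → Prop)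
    (hrefl : ∀ x, R x x) (hext : RelExtends r R)
    (D : Set X) (hDc : D.Countable) (hDd : DebreuDense r D)
    (B : Set X) (hBc : B.Countable)
    (hBcov : ∀ x y, Incomp r x y → x ∈ B ∨ y ∈ B) :
    DebreuSeparable R := by
  refine ⟨D ∪ B, hDc.union hBc, fun x y hxy hyx => ?_⟩
  by_cases hrxy : r x y
  · have hryx : ¬ r y x := fun h => hyx (hext _ _ h)
    obtain ⟨d, hd, h1, h2⟩ := hDd x y hrxy hryx
    exact ⟨d, Or.inl hd, hext _ _ h1, hext _ _ h2⟩
  · have hryx : ¬ r y x := fun h => hyx (hext _ _ h)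
    rcases hBcov x y ⟨hrxy, hryx⟩ with hx | hy
    · exact ⟨x, Or.inr hx, hrefl x, hxy⟩
    · exact ⟨y, Or.inr hy, hxy, hrefl y⟩

/-- Debreu's lemma: a Debreu separable total partial order has a real utility. -/
lemma aux_exists_utility {X : Type*} (R : X → X → Prop)
    (hpo : IsPartialOrderRel R) (htot : TotalRel R) (hsep : DebreuSeparable R) :
    ∃ u : X → ℝ, ∀ x y, R x y ↔ u x ≤ u y := by
  classical
  obtain ⟨hrefl, hanti, htrans⟩ := hpo
  obtain ⟨D, hDc, hDd⟩ := hsep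
  by_cases hD : D.Nonempty
  · obtain ⟨d, hd⟩ := hDc.exists_eq_range hD
    set g : ℕ → X → ℝ := fun n x =>
      (if R (d n) x then 1 else 0) + (if R (d n) x ∧ ¬ R x (d n) then 1 else 0) with hg
    have hg0 : ∀ n x, 0 ≤ g n x := by
      intro n x; simp only [hg]; positivity
    have hg2 : ∀ n x, g n x ≤ 2 := by
      intro n x; simp only [hg]; split_ifs <;> norm_num
    have hsum : ∀ x, Summable (fun n => (1/2 : ℝ)^n * g n x) := by
      intro x
      apply Summable.of_nonneg_of_le (fun n => by positivity)
        (fun n => ?_) (summable_geometric_two.mul_right 2)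
      have : (1/2 : ℝ)^n * g n x ≤ (1/2 : ℝ)^n * 2 :=
        mul_le_mul_of_nonneg_left (hg2 n x) (by positivity)
      simpa using this
    set u : X → ℝ := fun x => ∑' n, (1/2 : ℝ)^n * g n x with hu
    have hgmono : ∀ x y, R x y → ∀ n, g n x ≤ g n y := by
      intro x y hxy n
      have h1 : (if R (d n) x then (1:ℝ) else 0) ≤ (if R (d n) y then 1 else 0) := by
        split_ifs with h h' h'
        · exact le_refl 1
        · exact absurd (htrans _ _ _ h hxy) h'
        · norm_num
        · exact le_refl 0
      have h2 : (if R (d n) x ∧ ¬ R x (d n) then (1:ℝ) else 0) ≤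
          (if R (d n) y ∧ ¬ R y (d n) then 1 else 0) := by
        split_ifs with h h' h'
        · exact le_refl 1
        · exact absurd ⟨htrans _ _ _ h.1 hxy,
            fun hyd => h.2 (htrans _ _ _ hxy hyd)⟩ h'
        · norm_num
        · exact le_refl 0
      exact add_le_add h1 h2
    have hmono : ∀ x y, R x y → u x ≤ u y := by
      intro x y hxy
      exact Summable.tsum_le_tsum
        (fun n => mul_le_mul_of_nonneg_left (hgmono x y hxy n) (by positivity))
        (hsum x) (hsum y)
    have hstrict : ∀ x y, ¬ R x y → u y < u x := by
      intro x y hxy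
      have hyx : R y x := (htot x y).resolve_left hxy
      obtain ⟨e, heD, hye, hex⟩ := hDd y x hyx hxy
      rw [hd] at heD
      obtain ⟨n₀, hn₀⟩ := heD
      have key : g n₀ y < g n₀ x := by
        by_cases hey : R (d n₀) y
        · have hdy : d n₀ = y := hanti _ _ hey (hn₀ ▸ hye)
          simp only [hg, hdy, hrefl y, hyx, hxy, not_false_iff, if_true, and_self,
            not_true, and_false, if_false, and_true]
          norm_num
        · have hdx : R (d n₀) x := hn₀ ▸ hex
          have : g n₀ y = 0 := by simp [hg, hey]
          rw [this]
          have : (1:ℝ) ≤ g n₀ x := by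
            have h2 : (0:ℝ) ≤ (if R (d n₀) x ∧ ¬ R x (d n₀) then (1:ℝ) else 0) := by
              split_ifs <;> norm_num
            calc (1:ℝ) = 1 + 0 := by norm_num
            _ ≤ _ := add_le_add (by simp [hdx]) h2
          linarith
      exact Summable.tsum_lt_tsum
        (fun n => mul_le_mul_of_nonneg_left (hgmono y x hyx n) (by positivity))
        (mul_lt_mul_of_pos_left key (by positivity : (0:ℝ) < (1/2)^n₀))
        (hsum y) (hsum x)
    refine ⟨u, fun x y => ⟨hmono x y, fun hle => ?_⟩⟩
    by_contra hxy
    exact absurd hle (not_le.mpr (hstrict x y hxy))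
  · rw [Set.not_nonempty_iff_eq_empty] at hD
    have hall : ∀ x y, R x y := by
      intro x y
      by_contra hxy
      have hyx : R y x := (htot x y).resolve_left hxy
      obtain ⟨e, heD, -, -⟩ := hDd y x hyx hxy
      rw [hD] at heD
      exact heD
    exact ⟨fun _ => 0, fun x y => by simp [hall]⟩

theorem debreuSeparable_multiUtility_N_iff_debreuSeparableRealizer_N {X : Type*}
    (r : X → X → Prop) (hr : IsPartialOrderRel r)
    (hsep : DebreuSeparable r)
    (B : Set X) (hB : B.Countable)
    (hBcov : ∀ x y, Incomp r x y → x ∈ B ∨ y ∈ B)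
    (N : ℕ) :
    (∃ u : Fin N → X → ℝ, ∀ x y, r x y ↔ ∀ i, u i x ≤ u i y) ↔
    (∃ R : Fin N → X → X → Prop,
      (∀ i, IsLinearExtension r (R i) ∧ DebreuSeparable (R i)) ∧
      (∀ x y, r x y ↔ ∀ i, R i x y)) := by
  obtain ⟨D, hDc, hDd⟩ := hsep
  constructor
  · rintro ⟨u, hu⟩
    letI : IsPartialOrder X r :=
      { refl := hr.1
        trans := fun a b c => hr.2.2 a b c
        antisymm := fun a b => hr.2.1 a b }
    obtain ⟨s, hslin, hsext⟩ := extend_partialOrder r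
    haveI := hslin
    have srefl : ∀ a, s a a := fun a => refl_of s a
    have strans : ∀ a b c, s a b → s b c → s a c := fun a b c => trans_of s
    have santi : ∀ a b, s a b → s b a → a = b := fun a b => antisymm_of s
    have stot : ∀ a b, s a b ∨ s b a := fun a b => total_of s a b
    set R : Fin N → X → X → Prop :=
      fun i x y => u i x < u i y ∨ (u i x = u i y ∧ s x y) with hR
    have hext : ∀ i, RelExtends r (R i) := by
      intro i x y hxy
      rcases eq_or_lt_of_le ((hu x y).1 hxy i) with h | h
      · exact Or.inr ⟨h, hsext _ _ hxy⟩
      · exact Or.inl h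
    have hlin : ∀ i, IsLinearExtension r (R i) := by
      intro i
      refine ⟨⟨fun x => Or.inr ⟨rfl, srefl x⟩, ?_, ?_⟩, ?_, hext i⟩
      · rintro x y (h1 | ⟨h1, h1'⟩) (h2 | ⟨h2, h2'⟩)
        · exact absurd h2 (asymm h1)
        · exact absurd h2 h1.ne'
        · exact absurd h2 (h1 ▸ lt_irrefl _)
        · exact santi _ _ h1' h2'
      · rintro x y z (h1 | ⟨h1, h1'⟩) (h2 | ⟨h2, h2'⟩)
        · exact Or.inl (h1.trans h2)
        · exact Or.inl (h2 ▸ h1)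
        · exact Or.inl (h1 ▸ h2)
        · exact Or.inr ⟨h1.trans h2, strans _ _ _ h1' h2'⟩
      · intro x y
        rcases lt_trichotomy (u i x) (u i y) with h | h | h
        · exact Or.inl (Or.inl h)
        · rcases stot x y with hs | hs
          · exact Or.inl (Or.inr ⟨h, hs⟩)
          · exact Or.inr (Or.inr ⟨h.symm, hs⟩)
        · exact Or.inr (Or.inl h)
    refine ⟨R, fun i => ⟨hlin i, ?_⟩, fun x y => ?_⟩
    · exact aux_linext_debreuSeparable r (R i) (hlin i).1.1 (hext i) D hDc hDd B hB hBcov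
    · constructor
      · intro hxy i; exact hext i x y hxy
      · intro h
        apply (hu x y).2
        intro i
        rcases h i with h' | ⟨h', -⟩
        · exact h'.le
        · exact h'.le
  · rintro ⟨R, hR, hRr⟩
    have : ∀ i, ∃ v : X → ℝ, ∀ x y, R i x y ↔ v x ≤ v y := fun i =>
      aux_exists_utility (R i) (hR i).1.1 (hR i).1.2.1 (hR i).2
    choose u hu using this
    refine ⟨u, fun x y => ?_⟩
    rw [hRr x y]
    exact forall_congr' fun i => hu i x y
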